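/- Fix a time series x of length n with values in ℝ^d and let D_x : (ℝ^d)^m → ℝ, D_x(p) = dtw(p,x)², be the squared DTW distortion. If D_x is differentiable at a point p and w is an optimal warping path between p and x with warping matrix W and valence matrix V, then the gradient of D_x at p equals 2(Vp − Wx); i.e., for each i ∈ {1,…,m}, the partial gradient with respect to p_i equals 2(V_{ii} p_i − Σ_{j=1}^n W_{ij} x_j). -/

import Mathlib

open scoped RealInnerProductSpace

/-- A warping path of order `m × n` (0-based indexing: point `(i,j)` of the paper's
`{1,…,m} × {1,…,n}` corresponds to `(⟨i-1⟩, ⟨j-1⟩) : Fin m × Fin n`). -/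
structure WarpingPath (m n : ℕ) where
  steps : List (Fin m × Fin n)
  ne : steps ≠ []
  head_fst : (steps.head ne).1.val = 0
  head_snd : (steps.head ne).2.val = 0
  last_fst : (steps.getLast ne).1.val = m - 1
  last_snd : (steps.getLast ne).2.val = n - 1
  step : ∀ l : ℕ, (h : l + 1 < steps.length) →
    ((steps.get ⟨l + 1, h⟩).1.val = (steps.get ⟨l, Nat.lt_of_succ_lt h⟩).1.val + 1 ∧
      (steps.get ⟨l + 1, h⟩).2.val = (steps.get ⟨l, Nat.lt_of_succ_lt h⟩).2.val) ∨
    ((steps.get ⟨l + 1, h⟩).1.val = (steps.get ⟨l, Nat.lt_of_succ_lt h⟩).1.val ∧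
      (steps.get ⟨l + 1, h⟩).2.val = (steps.get ⟨l, Nat.lt_of_succ_lt h⟩).2.val + 1) ∨
    ((steps.get ⟨l + 1, h⟩).1.val = (steps.get ⟨l, Nat.lt_of_succ_lt h⟩).1.val + 1 ∧
      (steps.get ⟨l + 1, h⟩).2.val = (steps.get ⟨l, Nat.lt_of_succ_lt h⟩).2.val + 1)

/-- The cost `C_w(x,y) = Σ_l ‖x_{i_l} - y_{j_l}‖²` of aligning `x` and `y` along `w`. -/
noncomputable def cost {m n d : ℕ} (x : Fin m → EuclideanSpace ℝ (Fin d))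
    (y : Fin n → EuclideanSpace ℝ (Fin d)) (w : WarpingPath m n) : ℝ :=
  (w.steps.map (fun p => ‖x p.1 - y p.2‖ ^ 2)).sum

/-- The DTW distance `dtw(x,y) = min { √C_w(x,y) : w ∈ W_{m,n} }`. -/
noncomputable def dtw {m n d : ℕ} (x : Fin m → EuclideanSpace ℝ (Fin d))
    (y : Fin n → EuclideanSpace ℝ (Fin d)) : ℝ :=
  ⨅ w : WarpingPath m n, Real.sqrt (cost x y w)

/-- The warping matrix `W` of a warping path. -/
def warpMat {m n : ℕ} (w : WarpingPath m n) (i : Fin m) (j : Fin n) : ℕ :=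
  if (i, j) ∈ w.steps then 1 else 0

/-- The diagonal entries `V_{ii} = Σ_j W_{ij}` of the valence matrix of a warping path. -/
def valence {m n : ℕ} (w : WarpingPath m n) (i : Fin m) : ℕ :=
  ∑ j : Fin n, warpMat w i j

lemma warp_nodup {m n : ℕ} (w : WarpingPath m n) : w.steps.Nodup := by
  set key : Fin w.steps.length → ℕ :=
    fun l => (w.steps.get l).1.val + (w.steps.get l).2.val with hkey
  have step1 : ∀ l (h : l + 1 < w.steps.length),
      key ⟨l, Nat.lt_of_succ_lt h⟩ < key ⟨l + 1, h⟩ := by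
    intro l h
    rcases w.step l h with ⟨h1, h2⟩ | ⟨h1, h2⟩ | ⟨h1, h2⟩ <;>
      simp only [hkey, List.get_eq_getElem] at h1 h2 ⊢ <;> omega
  have mono : ∀ b (hb : b < w.steps.length) a (hab : a < b),
      key ⟨a, hab.trans hb⟩ < key ⟨b, hb⟩ := by
    intro b
    induction b with
    | zero => omega
    | succ c ih =>
      intro hb a hab
      have h1 : key ⟨c, Nat.lt_of_succ_lt hb⟩ < key ⟨c + 1, hb⟩ := step1 c hb
      rcases Nat.lt_or_ge a c with h | h
      · exact lt_trans (ih (Nat.lt_of_succ_lt hb) a h) h1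
      · have : a = c := by omega
        subst this; exact h1
  rw [List.nodup_iff_injective_get]
  intro a b hab
  by_contra hne
  rcases lt_trichotomy a.val b.val with h | h | h
  · have := mono b.val b.isLt a.val h
    simp only [hkey, Fin.eta, hab] at this
    omega
  · exact hne (Fin.ext h)
  · have := mono a.val a.isLt b.val h
    simp only [hkey, Fin.eta, hab] at this
    omega

lemma sum_steps_eq {m n : ℕ} (w : WarpingPath m n) (g : Fin m × Fin n → ℝ) :
    (w.steps.map g).sum = ∑ i : Fin m, ∑ j : Fin n, (warpMat w i j : ℝ) * g (i, j) := by
  have h1 : ∀ s : Fin m × Fin n,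
      (warpMat w s.1 s.2 : ℝ) * g s = if s ∈ w.steps.toFinset then g s else 0 := by
    intro s
    by_cases hs : s ∈ w.steps <;> simp [warpMat, hs, List.mem_toFinset]
  calc (w.steps.map g).sum = ∑ s ∈ w.steps.toFinset, g s :=
        (List.sum_toFinset g (warp_nodup w)).symm
    _ = ∑ s : Fin m × Fin n, if s ∈ w.steps.toFinset then g s else 0 := by
        rw [Finset.sum_ite_mem, Finset.univ_inter]
    _ = ∑ s : Fin m × Fin n, (warpMat w s.1 s.2 : ℝ) * g s := by
        simp [h1]
    _ = ∑ i : Fin m, ∑ j : Fin n, (warpMat w i j : ℝ) * g (i, j) := by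
        rw [Fintype.sum_prod_type]

lemma list_map_sum_eq {α : Type*} (L : List α) (f : α → ℝ) :
    (L.map f).sum = ∑ i : Fin L.length, f (L.get i) :=
  (Fin.sum_univ_fun_getElem L f).symm

/-- If the squared DTW distortion `D_x(p) = dtw(p,x)²` is differentiable at `p`
and `w` is an optimal warping path between `p` and `x` with warping matrix `W` and valence
matrix `V`, then the gradient of `D_x` at `p` is `2(Vp - Wx)`. -/
theorem stmt12 (m n d : ℕ) (x : Fin n → EuclideanSpace ℝ (Fin d))
    (p : Fin m → EuclideanSpace ℝ (Fin d)) (w : WarpingPath m n)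
    (hdiff : DifferentiableAt ℝ
      (fun q : Fin m → EuclideanSpace ℝ (Fin d) => dtw q x ^ 2) p)
    (hopt : dtw p x = Real.sqrt (cost p x w)) :
    ∀ v : Fin m → EuclideanSpace ℝ (Fin d),
      fderiv ℝ (fun q : Fin m → EuclideanSpace ℝ (Fin d) => dtw q x ^ 2) p v =
        ∑ i : Fin m,
          ⟪(2 : ℝ) • ((valence w i : ℝ) • p i - ∑ j : Fin n, (warpMat w i j : ℝ) • x j),
            v i⟫ := by
  intro v
  -- derivative of cost
  have hcost_eq : (fun q : Fin m → EuclideanSpace ℝ (Fin d) => cost q x w)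
      = fun q => ∑ l : Fin w.steps.length, ‖q (w.steps.get l).1 - x (w.steps.get l).2‖ ^ 2 := by
    funext q
    exact list_map_sum_eq w.steps _
  have hterm : ∀ l : Fin w.steps.length,
      HasFDerivAt (fun q : Fin m → EuclideanSpace ℝ (Fin d) =>
          ‖q (w.steps.get l).1 - x (w.steps.get l).2‖ ^ 2)
        ((2 : ℕ) • ((innerSL ℝ (p (w.steps.get l).1 - x (w.steps.get l).2)).comp
          (ContinuousLinearMap.proj (w.steps.get l).1))) p := by
    intro l
    exact ((ContinuousLinearMap.proj (R := ℝ)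
      (φ := fun _ : Fin m => EuclideanSpace ℝ (Fin d))
      (w.steps.get l).1).hasFDerivAt.sub_const (x (w.steps.get l).2)).norm_sq
  have hF : HasFDerivAt (fun q : Fin m → EuclideanSpace ℝ (Fin d) => cost q x w)
      (∑ l : Fin w.steps.length,
        (2 : ℕ) • ((innerSL ℝ (p (w.steps.get l).1 - x (w.steps.get l).2)).comp
          (ContinuousLinearMap.proj (w.steps.get l).1))) p := by
    rw [hcost_eq]
    exact HasFDerivAt.fun_sum fun l _ => hterm l
  -- min argument
  have hnonneg : ∀ (q : Fin m → EuclideanSpace ℝ (Fin d)) (w' : WarpingPath m n),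
      0 ≤ cost q x w' := by
    intro q w'
    apply List.sum_nonneg
    intro a ha
    simp only [List.mem_map] at ha
    obtain ⟨s, _, rfl⟩ := ha
    positivity
  have hdtw_nonneg : ∀ q : Fin m → EuclideanSpace ℝ (Fin d), 0 ≤ dtw q x := fun q =>
    Real.iInf_nonneg fun w' => Real.sqrt_nonneg _
  have hle : ∀ q : Fin m → EuclideanSpace ℝ (Fin d),
      dtw q x ≤ Real.sqrt (cost q x w) := fun q =>
    ciInf_le ⟨0, by rintro y ⟨w', rfl⟩; exact Real.sqrt_nonneg _⟩ w
  have hDle : ∀ q : Fin m → EuclideanSpace ℝ (Fin d), dtw q x ^ 2 ≤ cost q x w := by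
    intro q
    calc dtw q x ^ 2 ≤ Real.sqrt (cost q x w) ^ 2 :=
          pow_le_pow_left₀ (hdtw_nonneg q) (hle q) 2
      _ = cost q x w := Real.sq_sqrt (hnonneg q w)
  have hDeq : dtw p x ^ 2 = cost p x w := by rw [hopt, Real.sq_sqrt (hnonneg p w)]
  have hmin : IsLocalMin (fun q : Fin m → EuclideanSpace ℝ (Fin d) =>
      cost q x w - dtw q x ^ 2) p :=
    Filter.Eventually.of_forall fun q => by
      simp only
      have := hDle q
      linarith [hDeq]
  have hzero := hmin.fderiv_eq_zero
  have hsub : fderiv ℝ (fun q : Fin m → EuclideanSpace ℝ (Fin d) =>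
        cost q x w - dtw q x ^ 2) p
      = fderiv ℝ (fun q : Fin m → EuclideanSpace ℝ (Fin d) => cost q x w) p
        - fderiv ℝ (fun q : Fin m → EuclideanSpace ℝ (Fin d) => dtw q x ^ 2) p :=
    fderiv_sub hF.differentiableAt hdiff
  rw [hsub] at hzero
  have hgrad : fderiv ℝ (fun q : Fin m → EuclideanSpace ℝ (Fin d) => dtw q x ^ 2) p
      = fderiv ℝ (fun q : Fin m → EuclideanSpace ℝ (Fin d) => cost q x w) p :=
    (sub_eq_zero.mp hzero).symm
  rw [hgrad, hF.fderiv]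
  -- compute
  have happ : (∑ l : Fin w.steps.length,
        (2 : ℕ) • ((innerSL ℝ (p (w.steps.get l).1 - x (w.steps.get l).2)).comp
          (ContinuousLinearMap.proj (w.steps.get l).1))) v
      = ∑ l : Fin w.steps.length,
          2 * ⟪p (w.steps.get l).1 - x (w.steps.get l).2, v (w.steps.get l).1⟫ := by
    simp only [ContinuousLinearMap.sum_apply, ContinuousLinearMap.coe_smul',
      Pi.smul_apply, ContinuousLinearMap.coe_comp', Function.comp_apply,
      ContinuousLinearMap.proj_apply, innerSL_apply_apply, nsmul_eq_mul, Nat.cast_ofNat]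
  rw [happ]
  have hlist := list_map_sum_eq w.steps
    (fun s => 2 * ⟪p s.1 - x s.2, v s.1⟫)
  rw [← hlist, sum_steps_eq w (fun s => 2 * ⟪p s.1 - x s.2, v s.1⟫)]
  apply Finset.sum_congr rfl
  intro i _
  simp only [real_inner_smul_left, inner_sub_left, sum_inner, valence, Nat.cast_sum,
    starRingEnd_apply, star_trivial, mul_sub, Finset.mul_sum, Finset.sum_mul,
    ← Finset.sum_sub_distrib]
  apply Finset.sum_congr rfl
  intro j _
  ring
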